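/- For all n ≥ 1 and k ≥ 0, the number of matrices in B(n) whose first row has sum 0 and whose last column has sum k equals the number of row-Fishburn matrices of size n whose last column has sum k; that is, |B(n,k,0)| = |RM(n,k)|. -/

import Mathlib

open Finset

/-- Square matrices of nonnegative integers of dimension `m` (0-based indexing). -/
abbrev Mat (m : ℕ) := Matrix (Fin m) (Fin m) ℕ

/-- Upper-triangular: all entries strictly below the main diagonal vanish. -/
def UT {m : ℕ} (M : Mat m) : Prop := ∀ i j : Fin m, (j : ℕ) < (i : ℕ) → M i j = 0

/-- The size of a matrix: the sum of all its entries. -/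
def msize {m : ℕ} (M : Mat m) : ℕ := ∑ i : Fin m, ∑ j : Fin m, M i j

/-- Row `i` contains a nonzero entry. -/
def rowNonzero {m : ℕ} (M : Mat m) (i : Fin m) : Prop := ∃ j, M i j ≠ 0

/-- Column `j` contains a nonzero entry. -/
def colNonzero {m : ℕ} (M : Mat m) (j : Fin m) : Prop := ∃ i, M i j ≠ 0

/-- The dual matrix: transpose along the antidiagonal, `M̄_{i,j} = M_{m+1-j,m+1-i}`. -/
def dual {m : ℕ} (M : Mat m) : Mat m := fun i j => M j.rev i.rev

/-- A matrix is self-dual if it equals its dual. -/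
def SelfDual {m : ℕ} (M : Mat m) : Prop := M = dual M

/-- A Fishburn matrix: upper-triangular, every row and every column contains a
nonzero entry. -/
def IsFishburn {m : ℕ} (M : Mat m) : Prop :=
  UT M ∧ (∀ i, rowNonzero M i) ∧ (∀ j, colNonzero M j)

/-- The reduced size: sum of the entries in NW-cells and diagonal cells
(in 1-based terms, cells `(i,j)` with `i + j ≤ m + 1`). -/
def reducedSize {m : ℕ} (M : Mat m) : ℕ :=
  ∑ i : Fin m, ∑ j : Fin m, if (i : ℕ) + (j : ℕ) + 1 ≤ m then M i j else 0

/-- The reduced matrix: all entries in SE-cells are replaced by zeros. -/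
def reduced {m : ℕ} (M : Mat m) : Mat m :=
  fun i j => if (i : ℕ) + (j : ℕ) + 1 ≤ m then M i j else 0

/-- A super triangular matrix: upper-triangular and all SE-cells are zero. -/
def SuperTri {m : ℕ} (M : Mat m) : Prop :=
  UT M ∧ ∀ i j : Fin m, m < (i : ℕ) + (j : ℕ) + 1 → M i j = 0

/-- The sum of the first row. -/
def firstRowSum {m : ℕ} (M : Mat m) : ℕ :=
  ∑ i : Fin m, ∑ j : Fin m, if (i : ℕ) = 0 then M i j else 0

/-- The sum of the last column. -/
def lastColSum {m : ℕ} (M : Mat m) : ℕ :=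
  ∑ i : Fin m, ∑ j : Fin m, if (j : ℕ) + 1 = m then M i j else 0

/-- The sum of the diagonal cells (cells `(i,j)` with `i + j = m + 1`, 1-based). -/
def diagSum {m : ℕ} (M : Mat m) : ℕ :=
  ∑ i : Fin m, ∑ j : Fin m, if (i : ℕ) + (j : ℕ) + 1 = m then M i j else 0

/-- The sum of the center column (column `k+1` of a matrix of dimension `2k+1`). -/
def centerColSum {m : ℕ} (M : Mat m) : ℕ :=
  ∑ i : Fin m, ∑ j : Fin m, if 2 * (j : ℕ) + 1 = m then M i j else 0

/-- Square matrices of arbitrary dimension. -/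
abbrev SMat := Σ m : ℕ, Mat m

/-- `M(n)`: self-dual Fishburn matrices of reduced size `n`. -/
def Mset (n : ℕ) : Set SMat :=
  {A | IsFishburn A.2 ∧ SelfDual A.2 ∧ reducedSize A.2 = n}

/-- `M(n,k)`: matrices of `M(n)` whose first row has sum `k`. -/
def Mset₂ (n k : ℕ) : Set SMat := {A ∈ Mset n | firstRowSum A.2 = k}

/-- `M(n,k,p)`: matrices of `M(n,k)` whose diagonal cells have sum `p`. -/
def Mset₃ (n k p : ℕ) : Set SMat := {A ∈ Mset₂ n k | diagSum A.2 = p}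

/-- `EM(n,k)`: matrices of `M(n,k)` of even dimension. -/
def EMset (n k : ℕ) : Set SMat := {A ∈ Mset₂ n k | Even A.1}

/-- `OM(n,k)`: matrices of `M(n,k)` of odd dimension. -/
def OMset (n k : ℕ) : Set SMat := {A ∈ Mset₂ n k | Odd A.1}

/-- `RM(n)`: row-Fishburn matrices of size `n`. -/
def RMset (n : ℕ) : Set SMat :=
  {A | UT A.2 ∧ (∀ i, rowNonzero A.2 i) ∧ msize A.2 = n}

/-- `RM(n,k)`: row-Fishburn matrices of size `n` whose last column has sum `k`. -/
def RMset₂ (n k : ℕ) : Set SMat := {A ∈ RMset n | lastColSum A.2 = k}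

/-- `RM(n,k,p)`: matrices of `RM(n,k)` whose first row has sum `p`. -/
def RMset₃ (n k p : ℕ) : Set SMat := {A ∈ RMset₂ n k | firstRowSum A.2 = p}

/-- `SM(n)`: super triangular matrices of size `n` and dimension `2k+1` such that
(a) each of the first `k` columns contains a nonzero entry, and
(b) for `1 ≤ i ≤ k`, row `k+1-i` or column `k+1+i` contains a nonzero entry
(0-based: for `a < k`, row `a` or column `b` with `a + b = 2k` is nonzero). -/
def SMset (n : ℕ) : Set SMat :=
  {A | SuperTri A.2 ∧ msize A.2 = n ∧
    ∃ k : ℕ, A.1 = 2 * k + 1 ∧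
      (∀ j : Fin A.1, (j : ℕ) < k → colNonzero A.2 j) ∧
      (∀ a b : Fin A.1, (a : ℕ) < k → (a : ℕ) + (b : ℕ) = 2 * k →
        rowNonzero A.2 a ∨ colNonzero A.2 b)}

/-- `SM(n,k,p)`: matrices of `SM(n)` whose first row has sum `k` and whose center
column has sum `p`. -/
def SMset₃ (n k p : ℕ) : Set SMat :=
  {A ∈ SMset n | firstRowSum A.2 = k ∧ centerColSum A.2 = p}

/-- `B(n)`: upper-triangular matrices of size `n` in which every row except
possibly the first contains a nonzero entry. -/
def Bset (n : ℕ) : Set SMat :=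
  {A | UT A.2 ∧ (∀ i : Fin A.1, (i : ℕ) ≠ 0 → rowNonzero A.2 i) ∧ msize A.2 = n}

/-- `B(n,k,p)`: matrices of `B(n)` whose first row has sum `p` and whose last
column has sum `k`. -/
def Bset₃ (n k p : ℕ) : Set SMat :=
  {A ∈ Bset n | firstRowSum A.2 = p ∧ lastColSum A.2 = k}

/-- Extend a matrix by a zero first row and first column. -/
def mext {m : ℕ} (N : Mat m) : Mat (m + 1) :=
  fun i j => Fin.cases 0 (fun i' => Fin.cases 0 (fun j' => N i' j') j) i

@[simp] lemma mext_zero {m : ℕ} (N : Mat m) (j : Fin (m+1)) : mext N 0 j = 0 := rfl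

@[simp] lemma mext_succ_zero {m : ℕ} (N : Mat m) (i : Fin m) : mext N i.succ 0 = 0 := by
  simp [mext]

@[simp] lemma mext_succ_succ {m : ℕ} (N : Mat m) (i j : Fin m) :
    mext N i.succ j.succ = N i j := by
  simp [mext]

def mshrink {m : ℕ} (M : Mat (m+1)) : Mat m := fun i j => M i.succ j.succ

@[simp] lemma mshrink_mext {m : ℕ} (N : Mat m) : mshrink (mext N) = N := by
  funext i j; simp [mshrink]

lemma msize_mext {m : ℕ} (N : Mat m) : msize (mext N) = msize N := by
  simp [msize, Fin.sum_univ_succ]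

lemma firstRowSum_mext {m : ℕ} (N : Mat m) : firstRowSum (mext N) = 0 := by
  simp [firstRowSum, Fin.sum_univ_succ]

lemma lastColSum_mext {m : ℕ} (N : Mat m) : lastColSum (mext N) = lastColSum N := by
  simp only [lastColSum, Fin.sum_univ_succ, mext_zero, mext_succ_zero, mext_succ_succ,
    Fin.val_succ, Fin.val_zero]
  simp [Nat.add_right_cancel_iff]

lemma UT_mext {m : ℕ} {N : Mat m} (h : UT N) : UT (mext N) := by
  intro i j hij
  induction i using Fin.cases with
  | zero => simp
  | succ i =>
    induction j using Fin.cases with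
    | zero => simp
    | succ j =>
      rw [mext_succ_succ]
      exact h i j (by simp only [Fin.val_succ] at hij; omega)

lemma firstRow_eq_zero {m : ℕ} {M : Mat (m+1)} (h : firstRowSum M = 0) (j : Fin (m+1)) :
    M 0 j = 0 := by
  have h1 := (Finset.sum_eq_zero_iff.mp h) 0 (Finset.mem_univ _)
  simp at h1
  exact h1 j

lemma mext_mshrink {m : ℕ} {M : Mat (m+1)} (hUT : UT M) (h0 : firstRowSum M = 0) :
    mext (mshrink M) = M := by
  funext i j
  induction i using Fin.cases with
  | zero => simp [firstRow_eq_zero h0]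
  | succ i =>
    induction j using Fin.cases with
    | zero =>
      rw [mext_succ_zero]
      exact (hUT i.succ 0 (by simp)).symm
    | succ j => simp [mshrink]

lemma mext_inj : Function.Injective (fun A : SMat => (⟨A.1 + 1, mext A.2⟩ : SMat)) := by
  rintro ⟨m, M⟩ ⟨m', M'⟩ h
  simp only [Sigma.mk.inj_iff, Nat.add_right_cancel_iff] at h
  obtain ⟨rfl, h2⟩ := h
  simp only [heq_eq_eq] at h2
  have : M = M' := by
    have := congrArg mshrink h2
    simpa using this
  subst this; rfl

theorem stmt9 (n k : ℕ) (hn : 1 ≤ n) :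
    (Bset₃ n k 0).ncard = (RMset₂ n k).ncard := by
  have himg : Bset₃ n k 0 = (fun A : SMat => (⟨A.1 + 1, mext A.2⟩ : SMat)) '' RMset₂ n k := by
    ext A
    constructor
    · rintro ⟨⟨hUT, hrows, hsize⟩, h0, hk⟩
      obtain ⟨m, M⟩ := A
      rcases m with _ | m
      · exfalso
        simp [msize, Finset.univ_eq_empty] at hsize
        omega
      · refine ⟨⟨m, mshrink M⟩, ⟨⟨?_, ?_, ?_⟩, ?_⟩, ?_⟩
        · intro i j hij
          exact hUT i.succ j.succ (by simpa using hij)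
        · intro i
          obtain ⟨j, hj⟩ := hrows i.succ (by simp)
          induction j using Fin.cases with
          | zero => exact absurd (hUT i.succ 0 (by simp)) hj
          | succ j => exact ⟨j, hj⟩
        · have h1 : msize (mext (mshrink M)) = n := by
            rw [mext_mshrink hUT h0]; exact hsize
          rwa [msize_mext] at h1
        · have h1 : lastColSum (mext (mshrink M)) = k := by
            rw [mext_mshrink hUT h0]; exact hk
          rwa [lastColSum_mext] at h1
        · simp only [Sigma.mk.inj_iff]
          exact ⟨trivial, heq_of_eq (mext_mshrink hUT h0)⟩
    · rintro ⟨⟨m, N⟩, ⟨⟨hUT, hrows, hsize⟩, hk⟩, rfl⟩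
      refine ⟨⟨UT_mext hUT, ?_, ?_⟩, ?_, ?_⟩
      · intro i hi
        induction i using Fin.cases with
        | zero => simp at hi
        | succ i =>
          obtain ⟨j, hj⟩ := hrows i
          exact ⟨j.succ, by simpa using hj⟩
      · simpa [msize_mext] using hsize
      · exact firstRowSum_mext N
      · simpa [lastColSum_mext] using hk
  rw [himg, Set.ncard_image_of_injective _ mext_inj]
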